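/- Let T be the triangle in the Euclidean plane E² = EuclideanSpace ℝ (Fin 2) with vertices A = (0,0), B = (1,0), C = (−1/2, √3/2); its angles are 2π/3 at A and π/6 at B and at C, so T is not a Coxeter triangle. Let G be the subgroup of the isometry group of E² generated by the three reflections in the lines AB, BC, CA (the affine spans of the corresponding pairs of vertices). Then G acts properly discontinuously on E²: for all compact sets K, L ⊆ E², only finitely many g ∈ G satisfy g(K) ∩ L ≠ ∅. (The triangle with angles (2π/3, π/6, π/6) generates the discrete reflection group G̃₂.) -/

import Mathlib

open scoped RealInnerProductSpace

noncomputable section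

/-- Euclidean `n`-space. -/
abbrev Euc (n : ℕ) : Type := EuclideanSpace ℝ (Fin n)

/-- The `i`-th facet hyperplane of the simplex with vertices `p 0, …, p n`:
the affine span of the vertices other than `p i`. -/
def facetHyperplane {n : ℕ} (p : Fin (n + 1) → Euc n) (i : Fin (n + 1)) :
    AffineSubspace ℝ (Euc n) :=
  affineSpan ℝ (p '' {j | j ≠ i})

/-- `g` is the reflection of Euclidean `n`-space in the affine subspace `H`:
an isometry different from the identity which fixes `H` pointwise.  (When `H` is an
affine hyperplane this characterizes the reflection in `H`.) -/
def IsReflectionIn {n : ℕ} (g : Euc n ≃ᵢ Euc n) (H : AffineSubspace ℝ (Euc n)) : Prop :=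
  (∀ x ∈ H, g x = x) ∧ g ≠ IsometryEquiv.refl (Euc n)

/-- The reflection group of the simplex with vertices `p 0, …, p n`: the subgroup of the
isometry group of Euclidean `n`-space generated by the reflections in the `n + 1`
facet hyperplanes. -/
def reflGroup {n : ℕ} (p : Fin (n + 1) → Euc n) : Subgroup (Euc n ≃ᵢ Euc n) :=
  Subgroup.closure {g | ∃ i : Fin (n + 1), IsReflectionIn g (facetHyperplane p i)}

/-- A subgroup of the isometry group of Euclidean `n`-space acts properly discontinuously
(is discrete) if for all compact `K`, `L` only finitely many of its elements move `K`
so that it meets `L`. -/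
def ProperlyDiscont {n : ℕ} (G : Subgroup (Euc n ≃ᵢ Euc n)) : Prop :=
  ∀ K L : Set (Euc n), IsCompact K → IsCompact L →
    {g : Euc n ≃ᵢ Euc n | g ∈ G ∧ (g '' K ∩ L).Nonempty}.Finite

/-- `u` is an outward unit normal to the `i`-th facet of the simplex `p`. -/
def IsOutwardNormal {n : ℕ} (p : Fin (n + 1) → Euc n) (i : Fin (n + 1)) (u : Euc n) : Prop :=
  ‖u‖ = 1 ∧ (∀ v ∈ (facetHyperplane p i).direction, ⟪u, v⟫ = 0) ∧
    ∀ q ∈ facetHyperplane p i, ⟪u, p i - q⟫ < 0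


set_option maxHeartbeats 1000000

namespace G2A
def vec (a b : ℝ) : Euc 2 := (WithLp.equiv 2 (Fin 2 → ℝ)).symm ![a, b]
@[simp] lemma vec_apply0 (a b : ℝ) : vec a b 0 = a := rfl
@[simp] lemma vec_apply1 (a b : ℝ) : vec a b 1 = b := rfl
lemma euc_ext {x y : Euc 2} (h0 : x 0 = y 0) (h1 : x 1 = y 1) : x = y := by
  apply PiLp.ext; intro i; fin_cases i <;> assumption

def v1 : Euc 2 := vec 1 0
def v2 : Euc 2 := vec (1/2) (Real.sqrt 3 / 2)
def Cv : Euc 2 := vec (-(1/2)) (Real.sqrt 3 / 2)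

def HexLat : Set (Euc 2) := {t | ∃ a b : ℤ, t = (a : ℝ) • v1 + (b : ℝ) • v2}

lemma lat_zero : (0 : Euc 2) ∈ HexLat := ⟨0, 0, by simp⟩

lemma lat_comb {x y : Euc 2} (hx : x ∈ HexLat) (hy : y ∈ HexLat) (a b : ℤ) :
    (a : ℝ) • x + (b : ℝ) • y ∈ HexLat := by
  obtain ⟨a1, b1, rfl⟩ := hx
  obtain ⟨a2, b2, rfl⟩ := hy
  exact ⟨a * a1 + b * a2, a * b1 + b * b2, by push_cast; module⟩

lemma lat_add {x y : Euc 2} (hx : x ∈ HexLat) (hy : y ∈ HexLat) : x + y ∈ HexLat := by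
  have := lat_comb hx hy 1 1; simpa using this

lemma lat_neg {x : Euc 2} (hx : x ∈ HexLat) : -x ∈ HexLat := by
  have := lat_comb hx lat_zero (-1) 0; simpa using this

lemma v1_lat : v1 ∈ HexLat := ⟨1, 0, by simp⟩
lemma v2_lat : v2 ∈ HexLat := ⟨0, 1, by simp⟩

lemma lat_of_coords {x : Euc 2} (a b : ℤ) (h0 : x 0 = (a:ℝ) + (b:ℝ)/2)
    (h1 : x 1 = (b:ℝ) * (Real.sqrt 3 / 2)) : x ∈ HexLat := by
  refine ⟨a, b, euc_ext ?_ ?_⟩ <;>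
    simp only [v1, v2, PiLp.add_apply, PiLp.smul_apply, smul_eq_mul,
      vec_apply0, vec_apply1, h0, h1] <;> ring

lemma coord_abs_le_norm (t : Euc 2) (i : Fin 2) : |t i| ≤ ‖t‖ := by
  have h1 : ⟪EuclideanSpace.single i (1:ℝ), t⟫ = t i := by
    fin_cases i <;>
      simp [PiLp.inner_apply, EuclideanSpace.single_apply, Fin.sum_univ_two, conj_trivial]
  have h2 := abs_real_inner_le_norm (EuclideanSpace.single i (1:ℝ)) t
  rwa [h1, EuclideanSpace.norm_single, norm_one, one_mul] at h2

lemma lat_finite (R : ℝ) : {t : Euc 2 | t ∈ HexLat ∧ ‖t‖ ≤ R}.Finite := by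
  set N : ℤ := ⌈2 * R⌉ with hN
  apply Set.Finite.subset (Set.Finite.image
    (f := fun p : ℤ × ℤ => (p.1 : ℝ) • v1 + (p.2 : ℝ) • v2)
    ((Set.finite_Icc (-N) N).prod (Set.finite_Icc (-N) N)))
  rintro t ⟨⟨a, b, rfl⟩, hR⟩
  have hs : Real.sqrt 3 ^ 2 = 3 := Real.sq_sqrt (by norm_num)
  have hs1 : (1:ℝ) ≤ Real.sqrt 3 := by nlinarith [Real.sqrt_nonneg 3]
  set t : Euc 2 := (a : ℝ) • v1 + (b : ℝ) • v2 with ht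
  have ht0 : t 0 = (a : ℝ) + (b : ℝ) / 2 := by
    simp [ht, v1, v2, PiLp.add_apply, PiLp.smul_apply, smul_eq_mul]; try ring
  have ht1 : t 1 = (b : ℝ) * (Real.sqrt 3 / 2) := by
    simp [ht, v1, v2, PiLp.add_apply, PiLp.smul_apply, smul_eq_mul]; try ring
  have hb' : |(b : ℝ)| ≤ 2 * R := by
    have := (coord_abs_le_norm t 1).trans hR
    rw [ht1, abs_mul] at this
    have : |(b:ℝ)| * (1/2) ≤ R := by
      refine le_trans ?_ this
      have hb0 : (0:ℝ) ≤ |(b:ℝ)| := abs_nonneg _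
      have : |Real.sqrt 3 / 2| = Real.sqrt 3 / 2 := abs_of_nonneg (by positivity)
      rw [this]; nlinarith
    linarith
  have ha' : |(a : ℝ)| ≤ 2 * R := by
    have h0 := (coord_abs_le_norm t 0).trans hR
    rw [ht0] at h0
    have habs : |(a:ℝ)| = |((a:ℝ) + (b:ℝ)/2) - (b:ℝ)/2| := by ring_nf
    have h3 : |((a:ℝ) + (b:ℝ)/2) - (b:ℝ)/2| ≤ |(a:ℝ) + (b:ℝ)/2| + |(b:ℝ)/2| := abs_sub _ _
    have hb2 : |(b:ℝ)/2| ≤ R := by rw [abs_div]; simp; linarith [hb']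
    linarith [habs ▸ h3]
  have key : ∀ c : ℤ, |(c:ℝ)| ≤ 2 * R → c ∈ Set.Icc (-N) N := by
    intro c hc
    have h1 : (c:ℝ) ≤ (N:ℝ) := (le_abs_self _).trans (hc.trans (Int.le_ceil _))
    have h2 : ((-N:ℤ):ℝ) ≤ (c:ℝ) := by
      push_cast; linarith [neg_abs_le (c:ℝ), Int.le_ceil (2*R)]
    exact ⟨by exact_mod_cast h2, by exact_mod_cast h1⟩
  exact ⟨(a, b), ⟨key a ha', key b hb'⟩, rfl⟩

def lin (g : Euc 2 ≃ᵢ Euc 2) : Euc 2 ≃ₗᵢ[ℝ] Euc 2 := g.toRealLinearIsometryEquiv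
lemma lin_apply (g : Euc 2 ≃ᵢ Euc 2) (x : Euc 2) : lin g x = g x - g 0 := by simp [lin]
lemma apply_eq (g : Euc 2 ≃ᵢ Euc 2) (x : Euc 2) : g x = lin g x + g 0 := by
  rw [lin_apply]; abel

lemma lin_mul (g h : Euc 2 ≃ᵢ Euc 2) (x : Euc 2) : lin (g * h) x = lin g (lin h x) := by
  rw [lin_apply h, map_sub, lin_apply, lin_apply, lin_apply,
    IsometryEquiv.mul_apply, IsometryEquiv.mul_apply]
  abel

lemma lat_lin_closed (g : Euc 2 ≃ᵢ Euc 2) (h1 : lin g v1 ∈ HexLat) (h2 : lin g v2 ∈ HexLat) :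
    ∀ t ∈ HexLat, lin g t ∈ HexLat := by
  rintro t ⟨a, b, rfl⟩
  have : lin g ((a:ℝ) • v1 + (b:ℝ) • v2) = (a:ℝ) • lin g v1 + (b:ℝ) • lin g v2 := by
    rw [map_add, map_smul, map_smul]
  rw [this]; exact lat_comb h1 h2 a b

lemma pre_lat {g : Euc 2 ≃ᵢ Euc 2} (hlat : ∀ t ∈ HexLat, lin g t ∈ HexLat) {t s : Euc 2}
    (ht : t ∈ HexLat) (hst : lin g s = t) : s ∈ HexLat := by
  have hfin := lat_finite ‖t‖
  have hmaps : Set.MapsTo (lin g) {x : Euc 2 | x ∈ HexLat ∧ ‖x‖ ≤ ‖t‖}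
      {x : Euc 2 | x ∈ HexLat ∧ ‖x‖ ≤ ‖t‖} := by
    rintro x ⟨hx1, hx2⟩
    exact ⟨hlat x hx1, by rw [(lin g).norm_map]; exact hx2⟩
  have hinj : Set.InjOn (lin g) {x : Euc 2 | x ∈ HexLat ∧ ‖x‖ ≤ ‖t‖} :=
    (lin g).injective.injOn
  have hbij := (hfin.injOn_iff_bijOn_of_mapsTo hmaps).mp hinj
  obtain ⟨x, hxS, hx⟩ := hbij.surjOn ⟨ht, le_refl _⟩
  have hxs : x = s := (lin g).injective (hx.trans hst.symm)
  exact hxs ▸ hxS.1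

def Nice : Subgroup (Euc 2 ≃ᵢ Euc 2) where
  carrier := {g | g 0 ∈ HexLat ∧ ∀ t ∈ HexLat, lin g t ∈ HexLat}
  one_mem' := ⟨by simpa using lat_zero, fun t ht => by simpa [lin_apply] using ht⟩
  mul_mem' := by
    rintro g h ⟨hg0, hgl⟩ ⟨hh0, hhl⟩
    constructor
    · have : (g * h) 0 = lin g (h 0) + g 0 := by
        rw [IsometryEquiv.mul_apply, apply_eq g (h 0)]
      rw [this]; exact lat_add (hgl _ hh0) hg0
    · intro t ht; rw [lin_mul]; exact hgl _ (hhl _ ht)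
  inv_mem' := by
    rintro g ⟨hg0, hgl⟩
    have hginv0 : lin g (g⁻¹ 0) = -(g 0) := by
      rw [lin_apply, IsometryEquiv.apply_inv_self, zero_sub]
    constructor
    · exact pre_lat hgl (lat_neg hg0) hginv0
    · intro t ht
      have hss : lin g (lin g⁻¹ t) = t := by
        rw [lin_apply g⁻¹, map_sub, lin_apply, lin_apply, IsometryEquiv.apply_inv_self,
          IsometryEquiv.apply_inv_self]
        abel
      exact pre_lat hgl ht hss

lemma refl_lin (g : Euc 2 ≃ᵢ Euc 2) (P Q : Euc 2) (d0 d1 : ℝ)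
    (hQP : Q - P = vec d0 d1) (hd : d0^2 + d1^2 ≠ 0)
    (hP : g P = P) (hQ : g Q = Q) (hne : g ≠ IsometryEquiv.refl (Euc 2)) (x : Euc 2) :
    lin g x = vec ((x 0*(d0^2-d1^2) + 2*(x 1)*d0*d1)/(d0^2+d1^2))
              ((2*(x 0)*d0*d1 + x 1*(d1^2-d0^2))/(d0^2+d1^2)) := by
  have hLd : lin g (vec d0 d1) = vec d0 d1 := by
    rw [← hQP, map_sub, lin_apply, lin_apply, hP, hQ]
    abel
  set w : Euc 2 := vec (-d1) d0 with hw
  obtain ⟨z0, z1, hZ⟩ : ∃ z0 z1, lin g w = vec z0 z1 :=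
    ⟨lin g w 0, lin g w 1, euc_ext rfl rfl⟩
  have hzd : z0 * d0 + z1 * d1 = 0 := by
    have h := (lin g).inner_map_map w (vec d0 d1)
    rw [hLd, hZ] at h
    simp only [PiLp.inner_apply, RCLike.inner_apply, Fin.sum_univ_two, conj_trivial,
      hw, vec_apply0, vec_apply1] at h
    nlinarith [h]
  have hzz : z0^2 + z1^2 = d1^2 + d0^2 := by
    have h := (lin g).inner_map_map w w
    rw [hZ] at h
    simp only [PiLp.inner_apply, RCLike.inner_apply, Fin.sum_univ_two, conj_trivial,
      hw, vec_apply0, vec_apply1] at h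
    nlinarith [h]
  have decomp : ∀ y : Euc 2, y = (((y 0)*d0 + (y 1)*d1)/(d0^2+d1^2)) • (vec d0 d1)
      + (((-(y 0))*d1 + (y 1)*d0)/(d0^2+d1^2)) • w := by
    intro y
    apply euc_ext <;>
      · simp only [hw, PiLp.add_apply, PiLp.smul_apply, smul_eq_mul,
          vec_apply0, vec_apply1]
        field_simp
        ring
  have key : ((z0 + d1)^2 + (z1 - d0)^2) * ((z0 - d1)^2 + (z1 + d0)^2) = 0 := by
    linear_combination (z0^2 + z1^2 - d0^2 - d1^2) * hzz + (4*(z0*d0 + z1*d1)) * hzd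
  rcases mul_eq_zero.mp key with h | h
  · exfalso
    have hz0 : z0 = -d1 := by nlinarith [sq_nonneg (z0 + d1), sq_nonneg (z1 - d0)]
    have hz1 : z1 = d0 := by nlinarith [sq_nonneg (z0 + d1), sq_nonneg (z1 - d0)]
    have hzw : lin g w = w := by
      rw [hZ, hz0, hz1, hw]
    have hid : ∀ y, lin g y = y := by
      intro y
      conv_lhs => rw [decomp y]
      rw [map_add, map_smul, map_smul, hLd, hzw, ← decomp y]
    have h0 : g 0 = 0 := by
      have hPP := apply_eq g P
      rw [hid P, hP] at hPP
      rwa [left_eq_add] at hPP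
    apply hne
    apply IsometryEquiv.ext
    intro y
    rw [apply_eq g y, hid y, h0, add_zero]
    rfl
  · have hz0 : z0 = d1 := by nlinarith [sq_nonneg (z0 - d1), sq_nonneg (z1 + d0)]
    have hz1 : z1 = -d0 := by nlinarith [sq_nonneg (z0 - d1), sq_nonneg (z1 + d0)]
    conv_lhs => rw [decomp x]
    rw [map_add, map_smul, map_smul, hLd, hZ]
    apply euc_ext <;>
      · simp only [hw, PiLp.add_apply, PiLp.smul_apply, smul_eq_mul,
          vec_apply0, vec_apply1, hz0, hz1]
        field_simp
        ring
end G2A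

namespace G2A

lemma sqrt3_sq : Real.sqrt 3 ^ 2 = 3 := Real.sq_sqrt (by norm_num)

lemma nice_AB (g : Euc 2 ≃ᵢ Euc 2)
    (h : IsReflectionIn g (affineSpan ℝ ({0, v1} : Set (Euc 2)))) : g ∈ Nice := by
  obtain ⟨hfix, hne⟩ := h
  have hP : g 0 = 0 := hfix 0 (subset_affineSpan ℝ _ (by simp))
  have hQ : g v1 = v1 := hfix v1 (subset_affineSpan ℝ _ (by simp))
  have frm := refl_lin g 0 v1 1 0 (by rw [sub_zero]; rfl) (by norm_num) hP hQ hne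
  refine ⟨by rw [hP]; exact lat_zero, lat_lin_closed g ?_ ?_⟩
  · rw [frm v1]
    refine lat_of_coords 1 0 ?_ ?_ <;>
      · simp only [v1, v2, vec_apply0, vec_apply1]
        push_cast
        ring_nf
        try nlinarith [sqrt3_sq]
  · rw [frm v2]
    refine lat_of_coords 1 (-1) ?_ ?_ <;>
      · simp only [v1, v2, vec_apply0, vec_apply1]
        push_cast
        ring_nf
        try nlinarith [sqrt3_sq]
end G2A

namespace G2A
lemma sqrt3_cube : Real.sqrt 3 ^ 3 = 3 * Real.sqrt 3 := by
  rw [pow_succ, sqrt3_sq]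

lemma nice_CA (g : Euc 2 ≃ᵢ Euc 2)
    (h : IsReflectionIn g (affineSpan ℝ ({Cv, 0} : Set (Euc 2)))) : g ∈ Nice := by
  obtain ⟨hfix, hne⟩ := h
  have hP : g 0 = 0 := hfix 0 (subset_affineSpan ℝ _ (by simp))
  have hQ : g Cv = Cv := hfix Cv (subset_affineSpan ℝ _ (by simp))
  have hden : (-(1/2) : ℝ)^2 + (Real.sqrt 3 / 2)^2 = 1 := by nlinarith [sqrt3_sq]
  have frm := refl_lin g 0 Cv (-(1/2)) (Real.sqrt 3 / 2) (by rw [sub_zero]; rfl)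
    (by rw [hden]; norm_num) hP hQ hne
  refine ⟨by rw [hP]; exact lat_zero, lat_lin_closed g ?_ ?_⟩
  · rw [frm v1]
    refine lat_of_coords 0 (-1) ?_ ?_ <;>
      · simp only [v1, v2, vec_apply0, vec_apply1]
        rw [hden]
        push_cast
        ring_nf
        try linarith [sqrt3_sq, sqrt3_cube]
  · rw [frm v2]
    refine lat_of_coords (-1) 0 ?_ ?_ <;>
      · simp only [v1, v2, vec_apply0, vec_apply1]
        rw [hden]
        push_cast
        ring_nf
        try linarith [sqrt3_sq, sqrt3_cube]

lemma nice_BC (g : Euc 2 ≃ᵢ Euc 2)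
    (h : IsReflectionIn g (affineSpan ℝ ({v1, Cv} : Set (Euc 2)))) : g ∈ Nice := by
  obtain ⟨hfix, hne⟩ := h
  have hP : g v1 = v1 := hfix v1 (subset_affineSpan ℝ _ (by simp))
  have hQ : g Cv = Cv := hfix Cv (subset_affineSpan ℝ _ (by simp))
  have hden : (-(3/2) : ℝ)^2 + (Real.sqrt 3 / 2)^2 = 3 := by nlinarith [sqrt3_sq]
  have hQP : Cv - v1 = vec (-(3/2)) (Real.sqrt 3 / 2) := by
    apply euc_ext <;> simp [Cv, v1, PiLp.sub_apply] <;> norm_num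
  have frm := refl_lin g v1 Cv (-(3/2)) (Real.sqrt 3 / 2) hQP
    (by rw [hden]; norm_num) hP hQ hne
  have hlv1 : lin g v1 ∈ HexLat := by
    rw [frm v1]
    refine lat_of_coords 1 (-1) ?_ ?_ <;>
      · simp only [v1, v2, vec_apply0, vec_apply1]
        rw [hden]
        push_cast
        ring_nf
        try linarith [sqrt3_sq, sqrt3_cube]
  have hlv2 : lin g v2 ∈ HexLat := by
    rw [frm v2]
    refine lat_of_coords 0 (-1) ?_ ?_ <;>
      · simp only [v1, v2, vec_apply0, vec_apply1]
        rw [hden]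
        push_cast
        ring_nf
        try linarith [sqrt3_sq, sqrt3_cube]
  have hg0 : g 0 = v1 - lin g v1 := by
    have hQ' : lin g v1 + g 0 = v1 := (apply_eq g v1).symm.trans hP
    exact eq_sub_of_add_eq' hQ'
  refine ⟨?_, lat_lin_closed g hlv1 hlv2⟩
  rw [hg0, frm v1]
  refine lat_of_coords 0 1 ?_ ?_ <;>
    · simp only [v1, v2, Cv, vec_apply0, vec_apply1, PiLp.sub_apply]
      rw [hden]
      push_cast
      ring_nf
      try linarith [sqrt3_sq, sqrt3_cube]
end G2A

namespace G2A

lemma sqrt3_ne : Real.sqrt 3 ≠ 0 := by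
  have := Real.sqrt_pos.mpr (by norm_num : (3:ℝ) > 0); linarith

lemma basis_decomp (x : Euc 2) :
    x = (x 0 - x 1 / Real.sqrt 3) • v1 + (2 * x 1 / Real.sqrt 3) • v2 := by
  apply euc_ext <;>
    · simp only [v1, v2, PiLp.add_apply, PiLp.smul_apply, smul_eq_mul,
        vec_apply0, vec_apply1]
      field_simp
      try ring

lemma hBv : EuclideanSpace.single (0 : Fin 2) (1 : ℝ) = v1 := by
  apply euc_ext <;> simp [v1, EuclideanSpace.single_apply]

lemma hCv : (-(1 / 2) : ℝ) • EuclideanSpace.single (0 : Fin 2) (1 : ℝ) +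
    (Real.sqrt 3 / 2) • EuclideanSpace.single (1 : Fin 2) (1 : ℝ) = Cv := by
  apply euc_ext <;>
    simp [Cv, PiLp.add_apply, PiLp.smul_apply, EuclideanSpace.single_apply]

lemma v1_norm : ‖v1‖ = 1 := by
  rw [EuclideanSpace.norm_eq]
  simp [v1, Fin.sum_univ_two]

lemma v2_norm : ‖v2‖ = 1 := by
  rw [EuclideanSpace.norm_eq]
  simp only [v2, vec_apply0, vec_apply1, Fin.sum_univ_two, Real.norm_eq_abs, sq_abs]
  rw [show ((1:ℝ)/2)^2 + (Real.sqrt 3/2)^2 = 1 by nlinarith [sqrt3_sq]]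
  exact Real.sqrt_one

lemma phi_inj : Function.Injective (fun g : Euc 2 ≃ᵢ Euc 2 => (g 0, g v1, g v2)) := by
  intro g h hgh
  simp only [Prod.mk.injEq] at hgh
  obtain ⟨h0, h1, h2⟩ := hgh
  have l1 : lin g v1 = lin h v1 := by rw [lin_apply, lin_apply, h0, h1]
  have l2 : lin g v2 = lin h v2 := by rw [lin_apply, lin_apply, h0, h2]
  apply IsometryEquiv.ext
  intro x
  rw [apply_eq g x, apply_eq h x, h0]
  congr 1
  conv_lhs => rw [basis_decomp x]
  conv_rhs => rw [basis_decomp x]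
  rw [map_add, map_smul, map_smul, map_add, map_smul, map_smul, l1, l2]

end G2A


open G2A in
/-- Let `T` be the triangle in the Euclidean plane with vertices
`A = (0, 0)`, `B = (1, 0)` and `C = (-1/2, √3/2)` (its angles are `2π/3` at `A` and `π/6` at
`B` and `C`, so `T` is not a Coxeter triangle).  The group generated by the reflections in the
three lines `AB`, `BC`, `CA` acts properly discontinuously on the plane: the triangle with
angles `(2π/3, π/6, π/6)` generates the discrete reflection group `G̃₂`. -/
theorem G2_triangle_discrete (A B C : Euc 2)
    (hA : A = 0)
    (hB : B = EuclideanSpace.single (0 : Fin 2) (1 : ℝ))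
    (hC : C = (-(1 / 2) : ℝ) • EuclideanSpace.single (0 : Fin 2) (1 : ℝ) +
      (Real.sqrt 3 / 2) • EuclideanSpace.single (1 : Fin 2) (1 : ℝ)) :
    ProperlyDiscont (Subgroup.closure
      {g : Euc 2 ≃ᵢ Euc 2 |
        IsReflectionIn g (affineSpan ℝ {A, B}) ∨
        IsReflectionIn g (affineSpan ℝ {B, C}) ∨
        IsReflectionIn g (affineSpan ℝ {C, A})}) := by
  subst hA hB hC
  rw [hCv, hBv]
  have hgen : {g : Euc 2 ≃ᵢ Euc 2 |
      IsReflectionIn g (affineSpan ℝ {0, v1}) ∨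
      IsReflectionIn g (affineSpan ℝ {v1, Cv}) ∨
      IsReflectionIn g (affineSpan ℝ {Cv, 0})} ⊆ (Nice : Set (Euc 2 ≃ᵢ Euc 2)) := by
    rintro g (h | h | h)
    exacts [nice_AB g h, nice_BC g h, nice_CA g h]
  have hsub := (Subgroup.closure_le Nice).mpr hgen
  intro K L hK hL
  obtain ⟨RK, hRK⟩ := (Metric.isBounded_iff_subset_closedBall 0).mp hK.isBounded
  obtain ⟨RL, hRL⟩ := (Metric.isBounded_iff_subset_closedBall 0).mp hL.isBounded
  set R0 : ℝ := |RK| + |RL| with hR0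
  apply Set.Finite.subset (Set.Finite.preimage
    ((phi_inj).injOn)
    (((lat_finite R0).prod ((lat_finite (R0+1)).prod (lat_finite (R0+1))))))
  rintro g ⟨hgG, y, ⟨x, hxK, rfl⟩, hyL⟩
  obtain ⟨hg0lat, hglat⟩ := hsub hgG
  have hxn : ‖x‖ ≤ |RK| := by
    have := hRK hxK
    rw [Metric.mem_closedBall, dist_zero_right] at this
    exact this.trans (le_abs_self _)
  have hgxn : ‖g x‖ ≤ |RL| := by
    have := hRL hyL
    rw [Metric.mem_closedBall, dist_zero_right] at this
    exact this.trans (le_abs_self _)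
  have hg0n : ‖g 0‖ ≤ R0 := by
    have hd : ‖g 0 - g x‖ = ‖x‖ := by
      rw [← dist_eq_norm, IsometryEquiv.dist_eq, dist_zero_left]
    calc ‖g 0‖ = ‖(g 0 - g x) + g x‖ := by rw [sub_add_cancel]
      _ ≤ ‖g 0 - g x‖ + ‖g x‖ := norm_add_le _ _
      _ = ‖x‖ + ‖g x‖ := by rw [hd]
      _ ≤ |RK| + |RL| := add_le_add hxn hgxn
  have h1lat : g v1 ∈ HexLat := by rw [apply_eq]; exact lat_add (hglat v1 v1_lat) hg0lat
  have h2lat : g v2 ∈ HexLat := by rw [apply_eq]; exact lat_add (hglat v2 v2_lat) hg0lat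
  have h1n : ‖g v1‖ ≤ R0 + 1 := by
    rw [apply_eq]
    calc ‖lin g v1 + g 0‖ ≤ ‖lin g v1‖ + ‖g 0‖ := norm_add_le _ _
      _ = ‖v1‖ + ‖g 0‖ := by rw [(lin g).norm_map]
      _ ≤ 1 + R0 := by rw [v1_norm]; linarith
      _ = R0 + 1 := by ring
  have h2n : ‖g v2‖ ≤ R0 + 1 := by
    rw [apply_eq]
    calc ‖lin g v2 + g 0‖ ≤ ‖lin g v2‖ + ‖g 0‖ := norm_add_le _ _
      _ = ‖v2‖ + ‖g 0‖ := by rw [(lin g).norm_map]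
      _ ≤ 1 + R0 := by rw [v2_norm]; linarith
      _ = R0 + 1 := by ring
  exact ⟨⟨hg0lat, hg0n⟩, ⟨h1lat, h1n⟩, ⟨h2lat, h2n⟩⟩
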